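/- Let (T,d) be a rooted real tree (0-hyperbolic geodesic metric space) with root ρ, and for points σ, σ' let σ ∧ σ' denote their most recent common ancestor, i.e., the unique point with [ρ,σ] ∩ [ρ,σ'] = [ρ, σ∧σ']. Fix α < 1 and define d^{(α)}(σ,σ') = d(ρ,σ)^{1−α} + d(ρ,σ')^{1−α} − 2 d(ρ, σ∧σ')^{1−α}. Then d^{(α)} is a metric on T. -/
import Mathlib


/- The distorted distance `d^{(α)}` on a rooted real tree. -/
noncomputable def distAlpha {T : Type*} [MetricSpace T] (ρ : T) (mrca : T → T → T)
    (α : ℝ) (σ σ' : T) : ℝ :=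
  dist ρ σ ^ (1 - α) + dist ρ σ' ^ (1 - α) - 2 * dist ρ (mrca σ σ') ^ (1 - α)

/- Let `(T,d)` be a rooted real tree (a 0-hyperbolic geodesic metric space) with root `ρ`,
where `mrca σ σ'` denotes the most recent common ancestor of `σ` and `σ'`: it lies on the
geodesics from `ρ` to `σ` and to `σ'`, and `d(ρ, σ ∧ σ')` equals the Gromov product of
`σ, σ'` at `ρ`. For `α < 1` the function `d^{(α)}` is a metric on `T`. -/
theorem distAlpha_is_metric {T : Type*} [MetricSpace T] (ρ : T) (mrca : T → T → T)
    (hfour : ∀ x y z w : T,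
      dist x y + dist z w ≤ max (dist x z + dist y w) (dist x w + dist y z))
    (hgromov : ∀ x y, dist ρ (mrca x y) = (dist ρ x + dist ρ y - dist x y) / 2)
    (hgeo₁ : ∀ x y, dist ρ (mrca x y) + dist (mrca x y) x = dist ρ x)
    (hsymm : ∀ x y, mrca x y = mrca y x)
    (α : ℝ) (hα : α < 1) :
    (∀ σ σ' : T, 0 ≤ distAlpha ρ mrca α σ σ') ∧
    (∀ σ σ' : T, distAlpha ρ mrca α σ σ' = 0 ↔ σ = σ') ∧
    (∀ σ σ' : T, distAlpha ρ mrca α σ σ' = distAlpha ρ mrca α σ' σ) ∧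
    (∀ σ τ σ' : T,
      distAlpha ρ mrca α σ σ' ≤ distAlpha ρ mrca α σ τ + distAlpha ρ mrca α τ σ') := by
  have h1 : (0:ℝ) < 1 - α := by linarith
  have hmono : ∀ x y : ℝ, 0 ≤ x → x ≤ y → x ^ (1 - α) ≤ y ^ (1 - α) := fun x y hx hxy =>
    Real.rpow_le_rpow hx hxy h1.le
  have hinj : ∀ x y : ℝ, 0 ≤ x → 0 ≤ y → x ^ (1 - α) = y ^ (1 - α) → x = y := by
    intro x y hx hy h
    rcases lt_trichotomy x y with hlt | he | hlt
    · exact absurd h (ne_of_lt (Real.rpow_lt_rpow hx hlt h1))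
    · exact he
    · exact absurd h.symm (ne_of_lt (Real.rpow_lt_rpow hy hlt h1))
  have hle : ∀ x y : T, dist ρ (mrca x y) ≤ dist ρ x := by
    intro x y
    have h := hgeo₁ x y
    have h2 := dist_nonneg (x := mrca x y) (y := x)
    linarith
  have hle' : ∀ x y : T, dist ρ (mrca x y) ≤ dist ρ y := by
    intro x y; rw [hsymm]; exact hle y x
  refine ⟨?_, ?_, ?_, ?_⟩
  · intro σ σ'
    have ha := hmono _ _ dist_nonneg (hle σ σ')
    have hb := hmono _ _ dist_nonneg (hle' σ σ')
    simp only [distAlpha]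
    linarith
  · intro σ σ'
    constructor
    · intro h0
      simp only [distAlpha] at h0
      have ha := hmono _ _ dist_nonneg (hle σ σ')
      have hb := hmono _ _ dist_nonneg (hle' σ σ')
      have hea : dist ρ (mrca σ σ') ^ (1 - α) = dist ρ σ ^ (1 - α) := by linarith
      have heb : dist ρ (mrca σ σ') ^ (1 - α) = dist ρ σ' ^ (1 - α) := by linarith
      have hma : dist ρ (mrca σ σ') = dist ρ σ := hinj _ _ dist_nonneg dist_nonneg hea
      have hmb : dist ρ (mrca σ σ') = dist ρ σ' := hinj _ _ dist_nonneg dist_nonneg heb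
      have hg1 := hgeo₁ σ σ'
      have hg2 := hgeo₁ σ' σ
      rw [hsymm σ' σ] at hg2
      have hda : dist (mrca σ σ') σ = 0 := by linarith
      have hdb : dist (mrca σ σ') σ' = 0 := by linarith
      have e1 : mrca σ σ' = σ := by rwa [dist_eq_zero] at hda
      have e2 : mrca σ σ' = σ' := by rwa [dist_eq_zero] at hdb
      rw [← e1, e2]
    · rintro rfl
      simp only [distAlpha]
      have hm : dist ρ (mrca σ σ) = dist ρ σ := by
        rw [hgromov]; simp
      rw [hm]; ring
  · intro σ σ'
    simp only [distAlpha, hsymm σ σ']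
    ring
  · intro σ τ σ'
    -- key: min of the two Gromov products ≤ the third
    have hkey : dist ρ (mrca σ τ) ≤ dist ρ (mrca σ σ') ∨
        dist ρ (mrca τ σ') ≤ dist ρ (mrca σ σ') := by
      have h4 := hfour σ σ' τ ρ
      have g1 := hgromov σ σ'
      have g2 := hgromov σ τ
      have g3 := hgromov τ σ'
      rcases le_total (dist σ τ + dist σ' ρ) (dist σ ρ + dist σ' τ) with hc | hc
      · rw [max_eq_right hc] at h4
        right
        have : dist σ' τ = dist τ σ' := dist_comm _ _
        have : dist σ ρ = dist ρ σ := dist_comm _ _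
        have : dist τ ρ = dist ρ τ := dist_comm _ _
        rw [dist_comm σ' τ, dist_comm σ ρ, dist_comm τ ρ] at h4
        linarith
      · rw [max_eq_left hc] at h4
        left
        rw [dist_comm σ' ρ, dist_comm τ ρ] at h4
        linarith
    simp only [distAlpha]
    have hb1 : dist ρ (mrca σ τ) ^ (1 - α) ≤ dist ρ τ ^ (1 - α) :=
      hmono _ _ dist_nonneg (hle' σ τ)
    have hb2 : dist ρ (mrca τ σ') ^ (1 - α) ≤ dist ρ τ ^ (1 - α) :=
      hmono _ _ dist_nonneg (hle τ σ')
    rcases hkey with hk | hk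
    · have := hmono _ _ dist_nonneg hk
      linarith
    · have := hmono _ _ dist_nonneg hk
      linarith
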